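/- Let k ≥ 3 and for each m with 0 ≤ m ≤ P_k − 1 let S_k^{(m)} be the set of natural numbers N with 5 + m·∏_{i=1}^{k−1} P_i ≤ N ≤ 4 + (m+1)·∏_{i=1}^{k−1} P_i. Then every subset S_k^{(m)} contains at least ∏_{i=1}^{k−1} (P_i − 1) − ∏_{i=1}^{k−2} (P_i − 1) natural numbers coprime to ∏_{i=1}^{k} P_i. -/

import Mathlib

/-- `P i` is the `i`-th prime number (1-indexed): `P 1 = 2`, `P 2 = 3`, `P 3 = 5`, ... -/
noncomputable def P (i : ℕ) : ℕ := Nat.nth Nat.Prime (i - 1)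

/-- The `k`-th primorial, `∏_{i=1}^{k} P_i`. -/
noncomputable def primor (k : ℕ) : ℕ := ∏ i ∈ Finset.Icc 1 k, P i

lemma P_prime (i : ℕ) : (P i).Prime := Nat.prime_nth_prime _

lemma P_le_P {i j : ℕ} (hij : i ≤ j) : P i ≤ P j :=
  (Nat.nth_le_nth Nat.infinite_setOf_prime).2 (by omega)

lemma P_lt_P {i j : ℕ} (hi : 1 ≤ i) (hij : i < j) : P i < P j :=
  (Nat.nth_lt_nth Nat.infinite_setOf_prime).2 (by omega)

lemma primor_succ (k : ℕ) (hk : 1 ≤ k) : primor k = primor (k - 1) * P k := by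
  obtain ⟨b, rfl⟩ : ∃ b, k = b + 1 := ⟨k - 1, by omega⟩
  simp [primor, Finset.prod_Icc_succ_top (by omega : 1 ≤ b + 1)]

lemma P_not_dvd_primor (k : ℕ) : ¬ P (k + 1) ∣ primor k := by
  intro h
  rw [primor, Prime.dvd_finset_prod_iff (P_prime (k + 1)).prime] at h
  obtain ⟨i, hi, hdvd⟩ := h
  rw [Finset.mem_Icc] at hi
  have heq : P (k + 1) = P i := (Nat.prime_dvd_prime_iff_eq (P_prime _) (P_prime _)).1 hdvd
  have := P_lt_P hi.1 (by omega : i < k + 1)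
  omega

lemma totient_primor (k : ℕ) : (primor k).totient = ∏ i ∈ Finset.Icc 1 k, (P i - 1) := by
  induction k with
  | zero => simp [primor]
  | succ n ih =>
    have hcop : Nat.Coprime (primor n) (P (n + 1)) :=
      (((P_prime (n + 1)).coprime_iff_not_dvd).2 (P_not_dvd_primor n)).symm
    have h1 : primor (n + 1) = primor n * P (n + 1) := by
      simpa using primor_succ (n + 1) (by omega)
    rw [h1, Nat.totient_mul hcop, ih, Nat.totient_prime (P_prime (n + 1)),
      Finset.prod_Icc_succ_top (by omega : 1 ≤ n + 1)]

open scoped Classical in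
/-- For `k ≥ 3`, every block
`S_k^{(m)} = [5 + m·∏_{i=1}^{k-1} P_i, 4 + (m+1)·∏_{i=1}^{k-1} P_i]`, `0 ≤ m ≤ P_k - 1`,
contains at least `∏_{i=1}^{k-1}(P_i - 1) - ∏_{i=1}^{k-2}(P_i - 1)` naturals coprime
to `∏_{i=1}^k P_i`. -/
theorem prospective_primes_in_each_block (k : ℕ) (hk : 3 ≤ k)
    (m : ℕ) (hm : m ≤ P k - 1) :
    ((Finset.Icc (5 + m * primor (k - 1)) (4 + (m + 1) * primor (k - 1))).filter
      (fun N => Nat.Coprime N (primor k))).card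
      ≥ ∏ i ∈ Finset.Icc 1 (k - 1), (P i - 1)
        - ∏ i ∈ Finset.Icc 1 (k - 2), (P i - 1) := by
  classical
  set Q1 := primor (k - 1) with hQ1def
  set Q2 := primor (k - 2) with hQ2def
  set p := P k with hpdef
  set a := 5 + m * Q1 with hadef
  have hp2 : 2 ≤ p := (P_prime k).two_le
  have hQ1eq : Q1 = Q2 * P (k - 1) := by
    have h := primor_succ (k - 1) (by omega)
    rw [show k - 1 - 1 = k - 2 by omega] at h
    exact h
  have hQkeq : primor k = Q1 * p := primor_succ k (by omega)
  have hQ2dvd : Q2 ∣ Q1 := hQ1eq ▸ Dvd.intro _ rfl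
  have hB : Finset.Icc a (4 + (m + 1) * Q1) = Finset.Ico a (a + Q1) := by
    rw [← Finset.Ico_add_one_right_eq_Icc]
    congr 1
    have : (m + 1) * Q1 = m * Q1 + Q1 := by ring
    omega
  set B := Finset.Ico a (a + Q1) with hBdef
  set G := B.filter (fun N => Nat.Coprime N (primor k)) with hGdef
  set A := B.filter (fun N => Nat.Coprime Q1 N) with hAdef
  set D := B.filter (fun N => p ∣ N ∧ Nat.Coprime N Q2) with hDdef
  have hAcard : A.card = Q1.totient := Nat.filter_coprime_Ico_eq_totient Q1 a
  -- A ⊆ G ∪ D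
  have hsub : A ⊆ G ∪ D := by
    intro N hN
    rw [hAdef, Finset.mem_filter] at hN
    obtain ⟨hNB, hcop⟩ := hN
    rw [Finset.mem_union, hGdef, hDdef, Finset.mem_filter, Finset.mem_filter]
    by_cases h : Nat.Coprime N p
    · exact Or.inl ⟨hNB, by rw [hQkeq]; exact Nat.Coprime.mul_right hcop.symm h⟩
    · refine Or.inr ⟨hNB, ?_, Nat.Coprime.coprime_dvd_right hQ2dvd hcop.symm⟩
      by_contra hdvd
      exact h (Nat.coprime_comm.1 (((P_prime k).coprime_iff_not_dvd).2 hdvd))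
  -- card D ≤ totient Q2
  set t0 := (a + p - 1) / p with ht0def
  have hDcard : D.card ≤ Q2.totient := by
    calc D.card ≤ ((Finset.Ico t0 (t0 + Q2)).filter (fun t => Nat.Coprime Q2 t)).card := by
          apply Finset.card_le_card_of_injOn (fun N => N / p)
          · intro N hN
            rw [hDdef, Finset.mem_coe, Finset.mem_filter] at hN
            obtain ⟨hNB, hdvd, hcop⟩ := hN
            rw [hBdef, Finset.mem_Ico] at hNB
            obtain ⟨t, rfl⟩ := hdvd
            have ht : p * t / p = t := Nat.mul_div_cancel_left t (by omega)
            rw [Finset.mem_coe, Finset.mem_filter, Finset.mem_Ico]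
            beta_reduce
            rw [ht]
            have hat0 : a ≤ p * t0 := by
              have := Nat.lt_mul_div_succ (a + p - 1) (show 0 < p by omega)
              rw [← ht0def] at this
              have h2 : p * (t0 + 1) = p * t0 + p := by ring
              omega
            refine ⟨⟨?_, ?_⟩, (Nat.Coprime.coprime_dvd_left ⟨p, by ring⟩ hcop).symm⟩
            · rw [ht0def, Nat.div_le_iff_le_mul_add_pred (by omega : 0 < p)]
              have : a ≤ p * t := hNB.1
              omega
            · have hlt : p * t < p * (t0 + Q2) := by
                have h1 : p * t < a + Q1 := hNB.2
                have h2 : Q1 ≤ p * Q2 := by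
                  rw [hQ1eq]
                  calc Q2 * P (k - 1) ≤ Q2 * p :=
                        Nat.mul_le_mul_left _ (P_le_P (by omega))
                    _ = p * Q2 := by ring
                have h3 : p * (t0 + Q2) = p * t0 + p * Q2 := by ring
                omega
              exact Nat.lt_of_mul_lt_mul_left hlt
          · intro N1 h1 N2 h2 heq
            rw [Finset.mem_coe, Finset.mem_filter] at h1 h2
            have e1 : N1 / p * p = N1 := Nat.div_mul_cancel h1.2.1
            have e2 : N2 / p * p = N2 := Nat.div_mul_cancel h2.2.1
            simp only at heq
            rw [← e1, ← e2, heq]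
      _ = Q2.totient := Nat.filter_coprime_Ico_eq_totient Q2 t0
  have hcards : A.card ≤ G.card + D.card :=
    le_trans (Finset.card_le_card hsub) (Finset.card_union_le _ _)
  have htot1 : Q1.totient = ∏ i ∈ Finset.Icc 1 (k - 1), (P i - 1) := totient_primor (k - 1)
  have htot2 : Q2.totient = ∏ i ∈ Finset.Icc 1 (k - 2), (P i - 1) := totient_primor (k - 2)
  rw [ge_iff_le, ← htot1, ← htot2, hB]
  show Q1.totient - Q2.totient ≤ G.card
  omega
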